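/- arXiv:1506.03944 — 2 statements merged into one kernel-verified Lean document; each statement's English description precedes it below -/
import Mathlib

section
/- The assignment σ ↦ V(σ) is a bijection from the set of partial ordered set partitions of [n] onto the set of nonempty simplices of the standard chromatic subdivision χ(Δⁿ). Moreover: (1) the simplex V(σ) has dimension dim σ (i.e., |V(σ)| = dim σ + 1); (2) if σ is an ordered set partition of [n], its simplex is a maximal (n-dimensional) one; (3) the nonempty subsets of V(σ) are exactly the sets V(dl(σ,S)) for subsets S ⊊ C(σ). -/
open Finset

/-- union of a list of finsets -/
def lunion {α : Type*} [DecidableEq α] (L : List (Finset α)) : Finset α := L.foldr (· ∪ ·) ∅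

/-- `IsOSP A L` : `L` is an ordered set partition of the finite set `A`. -/
def IsOSP {α : Type*} [DecidableEq α] (A : Finset α) (L : List (Finset α)) : Prop :=
  (∀ B ∈ L, B.Nonempty) ∧ L.Pairwise (fun B C => Disjoint B C) ∧ lunion L = A

/-- `seenBlk L x` = `A_1 ∪ … ∪ A_{i(x)}`, the union of the blocks of `L` up to and
including the block containing `x`. -/
def seenBlk {α : Type*} [DecidableEq α] : List (Finset α) → α → Finset α
  | [], _ => ∅
  | A :: rest, x => if x ∈ A then A else A ∪ seenBlk rest x

/-- rank (1-based position in the increasing order) of `x` in the finset `S`. -/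
def rankIn (S : Finset ℕ) (x : ℕ) : ℕ := (S.filter (fun y => y ≤ x)).card

/-- the set `F(σ)` of flippable colors, for an ordered set partition of `[n] = {0,…,n}` -/
def Fset (n : ℕ) (L : List (Finset ℕ)) : Finset ℕ :=
  match L.getLast? with
  | some A => if A.card = 1 then Finset.range (n+1) \ A else Finset.range (n+1)
  | none => Finset.range (n+1)

/-- the flip `F(σ,x)` of an ordered set partition with respect to the color `x` -/
def flipOSP (x : ℕ) : List (Finset ℕ) → List (Finset ℕ)
  | [] => []
  | A :: rest =>
    if x ∈ A then
      if 2 ≤ A.card then {x} :: A.erase x :: rest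
      else
        match rest with
        | [] => [A]
        | B :: rest' => insert x B :: rest'
    else A :: flipOSP x rest

def levelAux : List ℕ → List (Finset ℕ) → Option ℕ
  | [], _ => none
  | _ :: _, [] => none
  | x :: xs, A :: As => if A = {x} then levelAux xs As else some x

/-- `levelFn Σ σ` = `level(σ,Σ)` (as an `Option`; `none` = undefined). -/
def levelFn (Sig : List ℕ) (L : List (Finset ℕ)) : Option ℕ :=
  levelAux Sig.reverse L.reverse

/-- ordered set partitions of `[n] = {0,…,n}` -/
def OSPn (n : ℕ) : Type := {L : List (Finset ℕ) // IsOSP (Finset.range (n+1)) L}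

/-- the graph `Γ_n`: vertices are the ordered set partitions of `[n]`, with `σ` and
`F(σ,x)` joined by an edge for every `x ∈ F(σ)`. -/
def Gamma (n : ℕ) : SimpleGraph (OSPn n) where
  Adj σ τ := σ ≠ τ ∧
    ((∃ x ∈ Fset n σ.1, τ.1 = flipOSP x σ.1) ∨ (∃ x ∈ Fset n τ.1, σ.1 = flipOSP x τ.1))
  symm := ⟨fun σ τ h => ⟨h.1.symm, h.2.symm⟩⟩
  loopless := ⟨fun σ h => h.1 rfl⟩

/-- a matching: a set of edges of `G`, no two of which share a vertex -/
def IsMatchingSet {V : Type*} (G : SimpleGraph V) (M : Set (Sym2 V)) : Prop :=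
  (∀ e ∈ M, e ∈ G.edgeSet) ∧ ∀ e ∈ M, ∀ f ∈ M, ∀ v : V, v ∈ e → v ∈ f → e = f

/-- a vertex is critical w.r.t. `M` if it lies in no edge of `M` -/
def CriticalVx {V : Type*} (M : Set (Sym2 V)) (v : V) : Prop := ∀ e ∈ M, v ∉ e

/-- the standard matching `M_Σ`, as a set of edges of `Γ_n` -/
def MSigma (n : ℕ) (Sig : List ℕ) : Set (Sym2 (OSPn n)) :=
  {e | ∃ σ τ : OSPn n, ∃ x, levelFn Sig σ.1 = some x ∧ τ.1 = flipOSP x σ.1 ∧ e = s(σ, τ)}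

/-- a list of edges is alternating w.r.t. `M` -/
def Alternates {V : Type*} (M : Set (Sym2 V)) (es : List (Sym2 V)) : Prop :=
  es.Chain' (fun e f => e ∈ M ↔ f ∉ M)

def IsProperlyAlternating {V : Type*} {G : SimpleGraph V} (M : Set (Sym2 V)) {u v : V}
    (p : G.Walk u v) : Prop :=
  Alternates M p.edges ∧
  (∀ e, p.edges.head? = some e → e ∉ M → CriticalVx M u) ∧
  (∀ e, p.edges.getLast? = some e → e ∉ M → CriticalVx M v)

def IsSemiAugmenting {V : Type*} {G : SimpleGraph V} (M : Set (Sym2 V)) {u v : V}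
    (p : G.Walk u v) : Prop :=
  IsProperlyAlternating M p ∧
  (∃ e, p.edges.head? = some e ∧ e ∈ M) ∧ (∃ e, p.edges.getLast? = some e ∧ e ∉ M)

def IsNonAugmenting {V : Type*} {G : SimpleGraph V} (M : Set (Sym2 V)) {u v : V}
    (p : G.Walk u v) : Prop :=
  Alternates M p.edges ∧
  (∃ e, p.edges.head? = some e ∧ e ∈ M) ∧ (∃ e, p.edges.getLast? = some e ∧ e ∈ M)

def IsWeaklySemiAugmenting {V : Type*} {G : SimpleGraph V} (M : Set (Sym2 V)) {u v : V}
    (p : G.Walk u v) : Prop :=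
  Alternates M p.edges ∧
  (p.edges = [] ∨
    ((∃ e, p.edges.head? = some e ∧ e ∈ M) ∧ (∃ e, p.edges.getLast? = some e ∧ e ∉ M)))

/-- a partial ordered set partition, as a list of pairs of blocks `(A_i, B_i)` -/
abbrev RawPOSP := List (Finset ℕ × Finset ℕ)

def carrierP (σ : RawPOSP) : Finset ℕ := (σ.map Prod.fst).foldr (· ∪ ·) ∅
def colorsP (σ : RawPOSP) : Finset ℕ := (σ.map Prod.snd).foldr (· ∪ ·) ∅

/-- `σ` is a partial ordered set partition of `[n] = {0,…,n}` -/
def IsPOSP (n : ℕ) (σ : RawPOSP) : Prop :=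
  σ ≠ [] ∧ (∀ p ∈ σ, p.2.Nonempty ∧ p.2 ⊆ p.1 ∧ p.1 ⊆ Finset.range (n+1)) ∧
  (σ.map Prod.fst).Pairwise (fun A B => Disjoint A B)

/-- view an ordered set partition as a partial one, with `B_i = A_i` -/
def toPairs (L : List (Finset ℕ)) : RawPOSP := L.map (fun A => (A, A))

def dlAux (S : Finset ℕ) : Finset ℕ → RawPOSP → RawPOSP
  | _, [] => []
  | acc, (A, B) :: rest =>
    if B ⊆ S then dlAux S (acc ∪ A) rest
    else (acc ∪ A, B \ S) :: dlAux S ∅ rest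

/-- the deletion `dl(σ, S)` -/
def dl (σ : RawPOSP) (S : Finset ℕ) : RawPOSP := dlAux S ∅ σ

/-- `D(σ, S)` = `A_i ∪ … ∪ A_t` for the minimal `i` with `B_i ∪ … ∪ B_t ⊆ S`, else `∅` -/
def Dfun (S : Finset ℕ) : RawPOSP → Finset ℕ
  | [] => ∅
  | b :: rest => if colorsP (b :: rest) ⊆ S then carrierP (b :: rest) else Dfun S rest

def nodesAux : Finset ℕ → RawPOSP → Finset (Finset ℕ × ℕ)
  | _, [] => ∅
  | acc, (A, B) :: rest => B.image (fun x => (acc ∪ A, x)) ∪ nodesAux (acc ∪ A) rest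

/-- the node set `V(σ)` of a partial ordered set partition -/
def nodesP (σ : RawPOSP) : Finset (Finset ℕ × ℕ) := nodesAux ∅ σ

/-- an ordered set partition of the whole of `[n]`, viewed as a partial one -/
def IsFullOSP (n : ℕ) (σ : RawPOSP) : Prop :=
  IsPOSP n σ ∧ carrierP σ = Finset.range (n+1) ∧ ∀ p ∈ σ, p.2 = p.1

/-- simplices of the standard chromatic subdivision `χ(Δⁿ)` -/
def IsSimplexChi (n : ℕ) (W : Finset (Finset ℕ × ℕ)) : Prop :=
  ∃ σ : RawPOSP, IsFullOSP n σ ∧ W ⊆ nodesP σ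

/-- a linked tuple of partial ordered set partitions -/
def Linked (T : List RawPOSP) : Prop := T.Chain' (fun σ τ => colorsP σ = carrierP τ)

/-- vertices of `χ^d(Δⁿ)`: linked `d`-tuples whose last entry has a singleton color set -/
def IsVertexChi (n d : ℕ) (v : List RawPOSP) : Prop :=
  v.length = d ∧ (∀ σ ∈ v, IsPOSP n σ) ∧ Linked v ∧ (colorsP (v.getLastD [])).card = 1

/-- the `n`-simplices of `χ^d(Δⁿ)`: linked `d`-tuples of ordered set partitions of `[n]` -/
def IsTopSimplexChi (n d : ℕ) (T : List RawPOSP) : Prop :=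
  T.length = d ∧ Linked T ∧
  ∀ σ ∈ T, IsPOSP n σ ∧ carrierP σ = Finset.range (n+1) ∧ ∀ p ∈ σ, p.2 = p.1

def faceAux : Finset ℕ → List RawPOSP → List RawPOSP
  | _, [] => []
  | S, σ :: rest => dl σ S :: faceAux (Dfun S σ) rest

/-- the face of the simplex `T` of `χ^d(Δⁿ)` determined by `S_d = S`:
`(dl(σ_1,S_1),…,dl(σ_d,S_d))` with `S_i = D(σ_{i+1},S_{i+1})`. -/
def faceT (T : List RawPOSP) (S : Finset ℕ) : List RawPOSP := (faceAux S T.reverse).reverse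

/-- the vertex of the `n`-simplex `T` colored `x` -/
def vertexOf (T : List RawPOSP) (x : ℕ) : List RawPOSP :=
  faceT T ((colorsP (T.getLastD [])) \ {x})

/-- relabel all elements by `f` -/
def relabel (f : ℕ → ℕ) (T : List RawPOSP) : List RawPOSP :=
  T.map (fun σ => σ.map (fun p => (p.1.image f, p.2.image f)))

/-- the unique order preserving bijection `I → J` (extended by the identity) -/
noncomputable def oMap (I J : Finset ℕ) (h : I.card = J.card) (x : ℕ) : ℕ :=
  if hx : x ∈ I then ((J.orderIsoOfFin h.symm) ((I.orderIsoOfFin rfl).symm ⟨x, hx⟩) : ℕ)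
  else x

/-- a compliant binary labeling of the vertices of `χ^d(Δⁿ)` -/
def Compliant (n d : ℕ) (lab : List RawPOSP → Bool) : Prop :=
  ∀ I J : Finset ℕ, I ⊆ Finset.range (n+1) → J ⊆ Finset.range (n+1) →
    ∀ h : I.card = J.card, ∀ v : List RawPOSP, IsVertexChi n d v →
      carrierP v.headI ⊆ I → lab (relabel (oMap I J h) v) = lab v

/-- the number of ordered set partitions of `[n] = {0,…,n}` -/
noncomputable def fOSP (n : ℕ) : ℕ :=
  Nat.card {L : List (Finset ℕ) // IsOSP (Finset.range (n+1)) L}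

/-- membership in the vertex set of `Γ_n(V)` -/
def InGammaV (V : Finset ℕ) (L : List (Finset ℕ)) : Prop :=
  ∃ A rest, L = A :: rest ∧ ¬ A ⊆ V

/-- a prefix in `V`: a tuple of nonempty pairwise disjoint subsets of `V` -/
def IsPrefixIn {α : Type*} [DecidableEq α] (V : Finset α) (P : List (Finset α)) : Prop :=
  (∀ A ∈ P, A.Nonempty ∧ A ⊆ V) ∧ P.Pairwise (fun A B => Disjoint A B)

/-- membership in the vertex set of `Γ_n(V,𝒜)` -/
def InGammaVA (V : Finset ℕ) (P : List (Finset ℕ)) (L : List (Finset ℕ)) : Prop :=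
  ∃ A rest, L = P ++ A :: rest ∧ ¬ A ⊆ V

/-- conducting bipartite graph of the first type -/
def ConductingFirst {V : Type*} (G : SimpleGraph V) (A B : Set V) : Prop :=
  A.ncard = B.ncard + 1 ∧
  ∀ v ∈ A, ∃ M : Set (Sym2 V), IsMatchingSet G M ∧ ∀ u, CriticalVx M u ↔ u = v

/-- conducting bipartite graph of the second type -/
def ConductingSecond {V : Type*} (G : SimpleGraph V) (A B : Set V) : Prop :=
  A.ncard = B.ncard ∧
  ∀ v ∈ A, ∀ w ∈ B, ∃ M : Set (Sym2 V), IsMatchingSet G M ∧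
    ∀ u, CriticalVx M u ↔ (u = v ∨ u = w)

/-- the vertex of the `n`-simplex `(As ‖ Bs)` of `χ²(Δⁿ)` colored `x` is internal -/
def InternalVx (n : ℕ) (As Bs : List (Finset ℕ)) (x : ℕ) : Prop :=
  carrierP (dl (toPairs As) (Finset.range (n+1) \ seenBlk Bs x)) = Finset.range (n+1)

@[simp] lemma carrierP_nil : carrierP [] = ∅ := rfl
@[simp] lemma carrierP_cons (p : Finset ℕ × Finset ℕ) (L : RawPOSP) :
    carrierP (p :: L) = p.1 ∪ carrierP L := rfl
@[simp] lemma colorsP_nil : colorsP [] = ∅ := rfl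
@[simp] lemma colorsP_cons (p : Finset ℕ × Finset ℕ) (L : RawPOSP) :
    colorsP (p :: L) = p.2 ∪ colorsP L := rfl
@[simp] lemma nodesAux_nil (acc : Finset ℕ) : nodesAux acc [] = ∅ := rfl
@[simp] lemma nodesAux_cons (acc A B : Finset ℕ) (L : RawPOSP) :
    nodesAux acc ((A,B) :: L) = B.image (fun x => (acc ∪ A, x)) ∪ nodesAux (acc ∪ A) L := rfl

lemma mem_carrierP {x : ℕ} {L : RawPOSP} : x ∈ carrierP L ↔ ∃ p ∈ L, x ∈ p.1 := by
  induction L with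
  | nil => simp
  | cons p L ih => simp [ih]

lemma mem_colorsP {x : ℕ} {L : RawPOSP} : x ∈ colorsP L ↔ ∃ p ∈ L, x ∈ p.2 := by
  induction L with
  | nil => simp
  | cons p L ih => simp [ih]

lemma carrierP_disj {L : RawPOSP} {X : Finset ℕ} (h : ∀ p ∈ L, Disjoint p.1 X) :
    Disjoint (carrierP L) X := by
  rw [Finset.disjoint_left]
  intro a ha hX
  obtain ⟨p, hp, hap⟩ := mem_carrierP.1 ha
  exact (Finset.disjoint_left.1 (h p hp)) hap hX

def GoodFrom (acc : Finset ℕ) (L : RawPOSP) : Prop :=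
  (∀ p ∈ L, p.2.Nonempty ∧ p.2 ⊆ p.1 ∧ Disjoint p.1 acc) ∧
  (L.map Prod.fst).Pairwise Disjoint

lemma goodFrom_cons {acc A B : Finset ℕ} {L : RawPOSP} (h : GoodFrom acc ((A,B)::L)) :
    GoodFrom (acc ∪ A) L := by
  obtain ⟨h1, h2⟩ := h
  rw [List.map_cons, List.pairwise_cons] at h2
  refine ⟨fun p hp => ?_, h2.2⟩
  obtain ⟨hn, hs, hd⟩ := h1 p (List.mem_cons_of_mem _ hp)
  exact ⟨hn, hs, Finset.disjoint_union_right.2 ⟨hd, (h2.1 p.1 (List.mem_map_of_mem hp)).symm⟩⟩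

lemma mem_nodesAux_fst {acc : Finset ℕ} {L : RawPOSP} {q : Finset ℕ × ℕ}
    (hBA : ∀ p ∈ L, p.2 ⊆ p.1) (h : q ∈ nodesAux acc L) : acc ⊆ q.1 ∧ q.2 ∈ q.1 := by
  induction L generalizing acc with
  | nil => simp at h
  | cons p L ih =>
    obtain ⟨A, B⟩ := p
    rw [nodesAux_cons, Finset.mem_union] at h
    rcases h with h | h
    · obtain ⟨x, hx, rfl⟩ := Finset.mem_image.1 h
      exact ⟨Finset.subset_union_left,
        Finset.mem_union_right _ (hBA (A,B) (List.mem_cons_self) hx)⟩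
    · obtain ⟨h1, h2⟩ := ih (fun p hp => hBA p (List.mem_cons_of_mem _ hp)) h
      exact ⟨Finset.subset_union_left.trans h1, h2⟩

lemma snd_not_acc {acc : Finset ℕ} {L : RawPOSP} {q : Finset ℕ × ℕ}
    (hg : GoodFrom acc L) (h : q ∈ nodesAux acc L) : q.2 ∉ acc := by
  induction L generalizing acc with
  | nil => simp at h
  | cons p L ih =>
    obtain ⟨A, B⟩ := p
    rw [nodesAux_cons, Finset.mem_union] at h
    rcases h with h | h
    · obtain ⟨x, hx, rfl⟩ := Finset.mem_image.1 h
      obtain ⟨hn, hs, hd⟩ := hg.1 (A,B) (List.mem_cons_self)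
      exact fun hxa => (Finset.disjoint_left.1 hd) (hs hx) hxa
    · intro hq
      exact ih (goodFrom_cons hg) h (Finset.mem_union_left _ hq)

lemma snd_mem_colors {acc : Finset ℕ} {L : RawPOSP} {q : Finset ℕ × ℕ}
    (h : q ∈ nodesAux acc L) : q.2 ∈ colorsP L := by
  induction L generalizing acc with
  | nil => simp at h
  | cons p L ih =>
    obtain ⟨A, B⟩ := p
    rw [nodesAux_cons, Finset.mem_union] at h
    rcases h with h | h
    · obtain ⟨x, hx, rfl⟩ := Finset.mem_image.1 h
      exact Finset.mem_union_left _ hx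
    · exact Finset.mem_union_right _ (ih h)

lemma exists_node {x : ℕ} {L : RawPOSP} (hx : x ∈ colorsP L) (acc : Finset ℕ) :
    ∃ C, (C, x) ∈ nodesAux acc L := by
  induction L generalizing acc with
  | nil => simp at hx
  | cons p L ih =>
    obtain ⟨A, B⟩ := p
    rw [colorsP_cons, Finset.mem_union] at hx
    rcases hx with hx | hx
    · exact ⟨acc ∪ A, Finset.mem_union_left _ (Finset.mem_image_of_mem _ hx)⟩
    · obtain ⟨C, hC⟩ := ih hx (acc ∪ A)
      exact ⟨C, Finset.mem_union_right _ hC⟩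

lemma card_nodesAux {acc : Finset ℕ} {L : RawPOSP} (hg : GoodFrom acc L) :
    (nodesAux acc L).card = (colorsP L).card := by
  induction L generalizing acc with
  | nil => simp
  | cons p L ih =>
    obtain ⟨A, B⟩ := p
    have hg' := goodFrom_cons hg
    have hdisj : Disjoint (B.image (fun x => (acc ∪ A, x))) (nodesAux (acc ∪ A) L) := by
      rw [Finset.disjoint_left]
      rintro q hq hq'
      obtain ⟨x, hx, rfl⟩ := Finset.mem_image.1 hq
      have := snd_not_acc hg' hq'
      exact this (Finset.mem_union_right _ ((hg.1 (A,B) (List.mem_cons_self)).2.1 hx))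
    have hdisj2 : Disjoint B (colorsP L) := by
      rw [Finset.disjoint_left]
      intro x hxB hxC
      obtain ⟨p, hp, hxp⟩ := mem_colorsP.1 hxC
      have h1 : x ∈ p.1 := (hg'.1 p hp).2.1 hxp
      have h2 : Disjoint p.1 (acc ∪ A) := (hg'.1 p hp).2.2
      exact (Finset.disjoint_left.1 h2) h1
        (Finset.mem_union_right _ ((hg.1 (A,B) (List.mem_cons_self)).2.1 hxB))
    rw [nodesAux_cons, Finset.card_union_of_disjoint hdisj, colorsP_cons,
      Finset.card_union_of_disjoint hdisj2, ih hg',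
      Finset.card_image_of_injective _ (fun a b h => by simpa using h)]

lemma nodes_image_snd {acc : Finset ℕ} {L : RawPOSP} :
    (nodesAux acc L).image Prod.snd ⊆ colorsP L := fun x hx => by
  obtain ⟨q, hq, rfl⟩ := Finset.mem_image.1 hx
  exact snd_mem_colors hq

lemma colors_sub_image {acc : Finset ℕ} {L : RawPOSP} :
    colorsP L ⊆ (nodesAux acc L).image Prod.snd := fun x hx => by
  obtain ⟨C, hC⟩ := exists_node hx acc
  exact Finset.mem_image.2 ⟨(C, x), hC, rfl⟩

lemma snd_injOn {acc : Finset ℕ} {L : RawPOSP} (hg : GoodFrom acc L) :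
    Set.InjOn Prod.snd (nodesAux acc L : Set (Finset ℕ × ℕ)) := by
  have h1 : (nodesAux acc L).image Prod.snd = colorsP L :=
    le_antisymm nodes_image_snd colors_sub_image
  have h2 : ((nodesAux acc L).image Prod.snd).card = (nodesAux acc L).card := by
    rw [h1, card_nodesAux hg]
  exact Finset.injOn_of_card_image_eq h2

-- key filter lemma for dl
lemma nodes_dlAux (S : Finset ℕ) : ∀ (L : RawPOSP) (acc acc0 : Finset ℕ),
    nodesAux acc (dlAux S acc0 L) = (nodesAux (acc ∪ acc0) L).filter (fun q => q.2 ∉ S) := by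
  intro L
  induction L with
  | nil => intro acc acc0; simp [dlAux]
  | cons p L ih =>
    intro acc acc0
    obtain ⟨A, B⟩ := p
    rw [dlAux]
    by_cases h : B ⊆ S
    · have hemp : (B.image (fun x => (acc ∪ acc0 ∪ A, x))).filter (fun q => q.2 ∉ S) = ∅ := by
        rw [Finset.filter_eq_empty_iff]
        rintro q hq
        obtain ⟨x, hx, rfl⟩ := Finset.mem_image.1 hq
        simp [h hx]
      rw [if_pos h, ih, nodesAux_cons, Finset.filter_union, ← Finset.union_assoc, hemp,
        Finset.empty_union]
    · rw [if_neg h, nodesAux_cons, ih, nodesAux_cons, Finset.filter_union, Finset.union_empty,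
        ← Finset.union_assoc]
      congr 1
      ext q
      simp only [Finset.mem_filter, Finset.mem_image, Finset.mem_sdiff]
      constructor
      · rintro ⟨x, ⟨hx, hxs⟩, rfl⟩
        exact ⟨⟨x, hx, rfl⟩, hxs⟩
      · rintro ⟨⟨x, hx, rfl⟩, hxs⟩
        exact ⟨x, ⟨hx, hxs⟩, rfl⟩

lemma no_node_acc {acc : Finset ℕ} {L : RawPOSP} (hg : GoodFrom acc L)
    {q : Finset ℕ × ℕ} (h : q ∈ nodesAux acc L) : q.1 ≠ acc := by
  intro heq
  have h1 := (mem_nodesAux_fst (fun p hp => (hg.1 p hp).2.1) h).2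
  exact snd_not_acc hg h (heq ▸ h1)

lemma nodesAux_inj : ∀ (L M : RawPOSP) (acc : Finset ℕ), GoodFrom acc L → GoodFrom acc M →
    nodesAux acc L = nodesAux acc M → L = M := by
  intro L
  induction L with
  | nil =>
    rintro (_ | ⟨⟨A,B⟩, M⟩) acc hgL hgM h
    · rfl
    · exfalso
      obtain ⟨b, hb⟩ := (hgM.1 (A,B) (List.mem_cons_self)).1
      have : (acc ∪ A, b) ∈ nodesAux acc ((A,B)::M) :=
        Finset.mem_union_left _ (Finset.mem_image_of_mem _ hb)
      rw [← h] at this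
      simp at this
  | cons p L ih =>
    obtain ⟨A, B⟩ := p
    rintro (_ | ⟨⟨A',B'⟩, M⟩) acc hgL hgM h
    · exfalso
      obtain ⟨b, hb⟩ := (hgL.1 (A,B) (List.mem_cons_self)).1
      have : (acc ∪ A, b) ∈ nodesAux acc ((A,B)::L) :=
        Finset.mem_union_left _ (Finset.mem_image_of_mem _ hb)
      rw [h] at this
      simp at this
    · -- first components equal
      have hBA : ∀ p ∈ (A,B)::L, p.2 ⊆ p.1 := fun p hp => (hgL.1 p hp).2.1
      have hBA' : ∀ p ∈ (A',B')::M, p.2 ⊆ p.1 := fun p hp => (hgM.1 p hp).2.1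
      have hminL : ∀ q ∈ nodesAux acc ((A,B)::L), acc ∪ A ⊆ q.1 := by
        rintro q hq
        rcases Finset.mem_union.1 hq with hq | hq
        · obtain ⟨x, hx, rfl⟩ := Finset.mem_image.1 hq; exact Finset.Subset.refl _
        · exact (mem_nodesAux_fst (fun p hp => hBA p (List.mem_cons_of_mem _ hp)) hq).1
      have hminM : ∀ q ∈ nodesAux acc ((A',B')::M), acc ∪ A' ⊆ q.1 := by
        rintro q hq
        rcases Finset.mem_union.1 hq with hq | hq
        · obtain ⟨x, hx, rfl⟩ := Finset.mem_image.1 hq; exact Finset.Subset.refl _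
        · exact (mem_nodesAux_fst (fun p hp => hBA' p (List.mem_cons_of_mem _ hp)) hq).1
      obtain ⟨b, hb⟩ := (hgL.1 (A,B) (List.mem_cons_self)).1
      obtain ⟨b', hb'⟩ := (hgM.1 (A',B') (List.mem_cons_self)).1
      have hnb : (acc ∪ A, b) ∈ nodesAux acc ((A',B')::M) := by
        rw [← h]; exact Finset.mem_union_left _ (Finset.mem_image_of_mem _ hb)
      have hnb' : (acc ∪ A', b') ∈ nodesAux acc ((A,B)::L) := by
        rw [h]; exact Finset.mem_union_left _ (Finset.mem_image_of_mem _ hb')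
      have hAA : acc ∪ A = acc ∪ A' :=
        le_antisymm (hminL _ hnb') (hminM _ hnb)
      have hA : A = A' := by
        have d1 : Disjoint acc A := ((hgL.1 (A,B) (List.mem_cons_self)).2.2).symm
        have d2 : Disjoint acc A' := ((hgM.1 (A',B') (List.mem_cons_self)).2.2).symm
        calc A = (acc ∪ A) \ acc := (Finset.union_sdiff_cancel_left d1).symm
        _ = (acc ∪ A') \ acc := by rw [hAA]
        _ = A' := Finset.union_sdiff_cancel_left d2
      subst hA
      -- B characterization
      have hchar : ∀ (N : RawPOSP) (B0 : Finset ℕ), GoodFrom acc ((A,B0)::N) →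
          ∀ x, (acc ∪ A, x) ∈ nodesAux acc ((A,B0)::N) ↔ x ∈ B0 := by
        intro N B0 hg x
        constructor
        · intro hx
          rcases Finset.mem_union.1 hx with hx | hx
          · obtain ⟨y, hy, he⟩ := Finset.mem_image.1 hx
            rw [show y = x from congrArg Prod.snd he] at hy; exact hy
          · exact absurd rfl (no_node_acc (goodFrom_cons hg) hx)
        · intro hx
          exact Finset.mem_union_left _ (Finset.mem_image_of_mem _ hx)
      have hB : B = B' := by
        ext x
        rw [← hchar L B hgL x, h, hchar M B' hgM x]
      subst hB
      -- tails equal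
      have htail : nodesAux (acc ∪ A) L = nodesAux (acc ∪ A) M := by
        have key : ∀ (N : RawPOSP), GoodFrom acc ((A,B)::N) →
            nodesAux (acc ∪ A) N =
              (nodesAux acc ((A,B)::N)).filter (fun q => q.1 ≠ acc ∪ A) := by
          intro N hg
          ext q
          simp only [Finset.mem_filter]
          constructor
          · intro hq
            exact ⟨Finset.mem_union_right _ hq, no_node_acc (goodFrom_cons hg) hq⟩
          · rintro ⟨hq, hne⟩
            rcases Finset.mem_union.1 hq with hq | hq
            · obtain ⟨y, hy, rfl⟩ := Finset.mem_image.1 hq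
              exact absurd rfl hne
            · exact hq
        rw [key L hgL, key M hgM, h]
      rw [ih M (acc ∪ A) (goodFrom_cons hgL) (goodFrom_cons hgM) htail]

lemma dlAux_spec (S : Finset ℕ) : ∀ (L : RawPOSP) (acc : Finset ℕ), GoodFrom acc L →
    (∀ q ∈ dlAux S acc L, (q.2.Nonempty ∧ q.2 ⊆ q.1) ∧ q.1 ⊆ acc ∪ carrierP L) ∧
    ((dlAux S acc L).map Prod.fst).Pairwise Disjoint := by
  intro L
  induction L with
  | nil => intro acc _; simp [dlAux]
  | cons p L ih =>
    intro acc hg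
    obtain ⟨A, B⟩ := p
    have hg' := goodFrom_cons hg
    have hg0 : GoodFrom ∅ L := by
      refine ⟨fun p hp => ⟨(hg'.1 p hp).1, (hg'.1 p hp).2.1, Finset.disjoint_empty_right _⟩,
        hg'.2⟩
    rw [dlAux]
    by_cases h : B ⊆ S
    · rw [if_pos h]
      obtain ⟨h1, h2⟩ := ih (acc ∪ A) hg'
      refine ⟨fun q hq => ⟨(h1 q hq).1, ?_⟩, h2⟩
      refine ((h1 q hq).2).trans ?_
      rw [carrierP_cons]
      intro a ha
      rcases Finset.mem_union.1 ha with ha | ha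
      · rcases Finset.mem_union.1 ha with ha | ha
        · exact Finset.mem_union_left _ ha
        · exact Finset.mem_union_right _ (Finset.mem_union_left _ ha)
      · exact Finset.mem_union_right _ (Finset.mem_union_right _ ha)
    · rw [if_neg h]
      obtain ⟨h1, h2⟩ := ih ∅ hg0
      have hsub : ∀ q ∈ dlAux S ∅ L, q.1 ⊆ carrierP L := by
        intro q hq
        have := (h1 q hq).2
        rwa [Finset.empty_union] at this
      constructor
      · rintro q hq
        rcases List.mem_cons.1 hq with rfl | hq
        · refine ⟨⟨Finset.nonempty_of_ne_empty ?_, ?_⟩, ?_⟩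
          · intro he
            exact h (by rwa [← Finset.sdiff_eq_empty_iff_subset])
          · exact (Finset.sdiff_subset.trans
              ((hg.1 (A,B) (List.mem_cons_self)).2.1)).trans Finset.subset_union_right
          · rw [carrierP_cons]
            intro a ha
            rcases Finset.mem_union.1 ha with ha | ha
            · exact Finset.mem_union_left _ ha
            · exact Finset.mem_union_right _ (Finset.mem_union_left _ ha)
        · refine ⟨(h1 q hq).1, (hsub q hq).trans ?_⟩
          rw [carrierP_cons]
          intro a ha
          exact Finset.mem_union_right _ (Finset.mem_union_right _ ha)
      · rw [List.map_cons, List.pairwise_cons]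
        refine ⟨?_, h2⟩
        intro C hC
        obtain ⟨q, hq, rfl⟩ := List.mem_map.1 hC
        have hq1 := hsub q hq
        -- carrierP L disjoint from acc ∪ A
        have hd : Disjoint (carrierP L) (acc ∪ A) := by
          refine carrierP_disj (fun p hp => ?_)
          exact Finset.disjoint_union_right.2 ⟨(hg'.1 p hp).2.2.mono_right Finset.subset_union_left,
            (hg'.1 p hp).2.2.mono_right Finset.subset_union_right⟩
        exact (hd.mono_left hq1).symm

lemma dlAux_ne_nil (S : Finset ℕ) : ∀ (L : RawPOSP) (acc : Finset ℕ),
    (∃ p ∈ L, ¬ p.2 ⊆ S) → dlAux S acc L ≠ [] := by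
  intro L
  induction L with
  | nil => rintro acc ⟨p, hp, _⟩; simp at hp
  | cons p L ih =>
    rintro acc ⟨q, hq, hqS⟩
    obtain ⟨A, B⟩ := p
    rw [dlAux]
    by_cases h : B ⊆ S
    · rw [if_pos h]
      rcases List.mem_cons.1 hq with rfl | hq
      · exact absurd h hqS
      · exact ih (acc ∪ A) ⟨q, hq, hqS⟩
    · rw [if_neg h]; simp

def compP : RawPOSP → RawPOSP
  | [] => []
  | (A,B) :: L => (if A \ B = ∅ then [(B,B)] else [(A\B,A\B),(B,B)]) ++ compP L

lemma carrierP_append (L M : RawPOSP) : carrierP (L ++ M) = carrierP L ∪ carrierP M := by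
  induction L with
  | nil => simp
  | cons p L ih => simp [ih, Finset.union_assoc]

lemma carrierP_compP : ∀ {L : RawPOSP}, (∀ p ∈ L, p.2 ⊆ p.1) → carrierP (compP L) = carrierP L := by
  intro L
  induction L with
  | nil => intro _; rfl
  | cons p L ih =>
    intro h
    obtain ⟨A, B⟩ := p
    have hBA : B ⊆ A := h (A,B) (List.mem_cons_self)
    have ih' := ih (fun p hp => h p (List.mem_cons_of_mem _ hp))
    rw [compP, carrierP_append, ih']
    by_cases hd : A \ B = ∅
    · have : A = B := le_antisymm (Finset.sdiff_eq_empty_iff_subset.1 hd) hBA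
      simp [this]
    · simp only [if_neg hd, carrierP_cons, carrierP_nil, carrierP_cons, Finset.union_empty]
      rw [Finset.sdiff_union_of_subset hBA]

lemma mem_compP : ∀ {L : RawPOSP} {p : Finset ℕ × Finset ℕ}, (∀ r ∈ L, r.2 ⊆ r.1) →
    p ∈ compP L →
    p.2 = p.1 ∧ ∃ q ∈ L, p.1 ⊆ q.1 ∧ (q.2.Nonempty → p.1.Nonempty) := by
  intro L
  induction L with
  | nil => intro p _ hp; simp [compP] at hp
  | cons r L ih =>
    intro p hh hp
    obtain ⟨A, B⟩ := r
    rw [compP, List.mem_append] at hp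
    rcases hp with hp | hp
    · have hBA : B ⊆ A := hh (A,B) (List.mem_cons_self)
      by_cases hd : A \ B = ∅
      · rw [if_pos hd, List.mem_singleton] at hp
        subst hp
        exact ⟨rfl, (A,B), List.mem_cons_self, hBA, fun h => h⟩
      · rw [if_neg hd] at hp
        rcases List.mem_cons.1 hp with rfl | hp
        · exact ⟨rfl, (A,B), List.mem_cons_self, Finset.sdiff_subset,
            fun _ => Finset.nonempty_of_ne_empty hd⟩
        · rw [List.mem_singleton] at hp
          subst hp
          exact ⟨rfl, (A,B), List.mem_cons_self, hBA, fun h => h⟩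
    · obtain ⟨h1, q, hq, h2⟩ := ih (fun r hr => hh r (List.mem_cons_of_mem _ hr)) hp
      exact ⟨h1, q, List.mem_cons_of_mem _ hq, h2⟩

lemma compP_pairwise : ∀ {L : RawPOSP}, (∀ p ∈ L, p.2 ⊆ p.1) →
    (L.map Prod.fst).Pairwise Disjoint → ((compP L).map Prod.fst).Pairwise Disjoint := by
  intro L
  induction L with
  | nil => intro _ _; simp [compP]
  | cons r L ih =>
    intro h hp
    obtain ⟨A, B⟩ := r
    rw [List.map_cons, List.pairwise_cons] at hp
    have hBA : B ⊆ A := h (A,B) (List.mem_cons_self)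
    have ih' := ih (fun p hp => h p (List.mem_cons_of_mem _ hp)) hp.2
    rw [compP, List.map_append, List.pairwise_append]
    have hcross : ∀ C ∈ (if A \ B = ∅ then [(B,B)] else [(A\B,A\B),(B,B)]).map Prod.fst,
        C ⊆ A := by
      intro C hC
      by_cases hd : A \ B = ∅
      · rw [if_pos hd] at hC; simp at hC; subst hC; exact hBA
      · rw [if_neg hd] at hC
        simp at hC
        rcases hC with rfl | rfl
        · exact Finset.sdiff_subset
        · exact hBA
    refine ⟨?_, ih', ?_⟩
    · by_cases hd : A \ B = ∅
      · rw [if_pos hd]; simp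
      · rw [if_neg hd]
        simp only [List.map_cons, List.map_nil, List.pairwise_cons, List.not_mem_nil]
        refine ⟨?_, by simp⟩
        intro C hC
        simp at hC; subst hC
        exact Finset.sdiff_disjoint
    · intro C hC D hD
      obtain ⟨q, hq, rfl⟩ := List.mem_map.1 hD
      obtain ⟨h1, r, hr, h2, _⟩ := mem_compP (fun r hr => h r (List.mem_cons_of_mem _ hr)) hq
      have : Disjoint A r.1 := hp.1 r.1 (List.mem_map_of_mem hr)
      exact (this.mono (hcross C hC) h2)

lemma nodes_sub_comp : ∀ (L : RawPOSP) (acc : Finset ℕ) (T : RawPOSP),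
    (∀ p ∈ L, p.2 ⊆ p.1) → nodesAux acc L ⊆ nodesAux acc (compP L ++ T) := by
  intro L
  induction L with
  | nil => intro acc T _; simp
  | cons r L ih =>
    intro acc T h
    obtain ⟨A, B⟩ := r
    have hBA : B ⊆ A := h (A,B) (List.mem_cons_self)
    have ih' := ih (acc ∪ A) T (fun p hp => h p (List.mem_cons_of_mem _ hp))
    rw [compP, List.append_assoc]
    by_cases hd : A \ B = ∅
    · rw [if_pos hd]
      have hAB : A = B := le_antisymm (Finset.sdiff_eq_empty_iff_subset.1 hd) hBA
      subst hAB
      rw [List.singleton_append, nodesAux_cons, nodesAux_cons]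
      exact Finset.union_subset_union (le_refl _) ih'
    · rw [if_neg hd]
      have hkey : acc ∪ (A \ B) ∪ B = acc ∪ A := by
        rw [Finset.union_assoc]
        congr 1
        exact Finset.sdiff_union_of_subset hBA
      rw [List.cons_append, List.cons_append, List.nil_append, nodesAux_cons, nodesAux_cons,
        nodesAux_cons, hkey]
      intro q hq
      rcases Finset.mem_union.1 hq with hq | hq
      · exact Finset.mem_union_right _ (Finset.mem_union_left _ hq)
      · exact Finset.mem_union_right _ (Finset.mem_union_right _ (ih' hq))


lemma isPOSP_good {n : ℕ} {σ : RawPOSP} (h : IsPOSP n σ) : GoodFrom ∅ σ :=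
  ⟨fun p hp => ⟨(h.2.1 p hp).1, (h.2.1 p hp).2.1, Finset.disjoint_empty_right _⟩, h.2.2⟩

lemma fst_sub_carrier {L : RawPOSP} {p : Finset ℕ × Finset ℕ} (hp : p ∈ L) :
    p.1 ⊆ carrierP L := fun a ha => mem_carrierP.2 ⟨p, hp, ha⟩

lemma carrier_sub_range {n : ℕ} {σ : RawPOSP} (h : IsPOSP n σ) :
    carrierP σ ⊆ Finset.range (n+1) := by
  intro a ha
  obtain ⟨p, hp, hap⟩ := mem_carrierP.1 ha
  exact (h.2.1 p hp).2.2 hap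

lemma colors_nonempty {n : ℕ} {σ : RawPOSP} (h : IsPOSP n σ) : (colorsP σ).Nonempty := by
  obtain ⟨p, t, rfl⟩ := List.exists_cons_of_ne_nil h.1
  obtain ⟨b, hb⟩ := (h.2.1 p (List.mem_cons_self)).1
  exact ⟨b, Finset.mem_union_left _ hb⟩

lemma colors_eq_carrier {L : RawPOSP} (h : ∀ p ∈ L, p.2 = p.1) : colorsP L = carrierP L := by
  induction L with
  | nil => rfl
  | cons p L ih =>
    rw [colorsP_cons, carrierP_cons, h p (List.mem_cons_self),
      ih (fun q hq => h q (List.mem_cons_of_mem _ hq))]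

lemma nodes_dl (σ : RawPOSP) (S : Finset ℕ) :
    nodesP (dl σ S) = (nodesP σ).filter (fun q => q.2 ∉ S) := by
  have := nodes_dlAux S σ ∅ ∅
  rwa [Finset.union_empty] at this

lemma dl_isPOSP {n : ℕ} {σ : RawPOSP} (h : IsPOSP n σ) {S : Finset ℕ}
    (hS : S ⊂ colorsP σ) : IsPOSP n (dl σ S) := by
  obtain ⟨x, hx, hxS⟩ := Finset.exists_of_ssubset hS
  obtain ⟨p, hp, hxp⟩ := mem_colorsP.1 hx
  obtain ⟨h1, h2⟩ := dlAux_spec S σ ∅ (isPOSP_good h)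
  refine ⟨dlAux_ne_nil S σ ∅ ⟨p, hp, fun hsub => hxS (hsub hxp)⟩, fun q hq => ?_, h2⟩
  refine ⟨(h1 q hq).1.1, (h1 q hq).1.2, ?_⟩
  have := (h1 q hq).2
  rw [Finset.empty_union] at this
  exact this.trans (carrier_sub_range h)

lemma completion {n : ℕ} {σ : RawPOSP} (h : IsPOSP n σ) :
    ∃ τ : RawPOSP, IsFullOSP n τ ∧ nodesP σ ⊆ nodesP τ := by
  classical
  set R := Finset.range (n+1) \ carrierP σ with hR
  set T : RawPOSP := if R = ∅ then [] else [(R,R)] with hT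
  refine ⟨compP σ ++ T, ⟨⟨?_, ?_, ?_⟩, ?_, ?_⟩, ?_⟩
  · -- nonempty
    obtain ⟨p, t, rfl⟩ := List.exists_cons_of_ne_nil h.1
    obtain ⟨A, B⟩ := p
    rw [compP]
    intro hcontra
    rcases List.append_eq_nil_iff.1 hcontra with ⟨hc1, _⟩
    rcases List.append_eq_nil_iff.1 hc1 with ⟨hc2, _⟩
    by_cases hd : A \ B = ∅ <;> simp [hd] at hc2
  · -- blocks
    intro p hp
    rcases List.mem_append.1 hp with hp | hp
    · obtain ⟨h1, q, hq, h2, h3⟩ := mem_compP (fun r hr => (h.2.1 r hr).2.1) hp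
      exact ⟨h1 ▸ h3 (h.2.1 q hq).1, h1 ▸ Finset.Subset.refl _,
        h2.trans (h.2.1 q hq).2.2⟩
    · have hRne : R ≠ ∅ := by
        intro he; rw [hT, if_pos he] at hp; simp at hp
      rw [hT, if_neg hRne, List.mem_singleton] at hp
      subst hp
      exact ⟨Finset.nonempty_of_ne_empty hRne, Finset.Subset.refl _, Finset.sdiff_subset⟩
  · -- pairwise
    rw [List.map_append, List.pairwise_append]
    refine ⟨compP_pairwise (fun r hr => (h.2.1 r hr).2.1) h.2.2, ?_, ?_⟩
    · by_cases hd : R = ∅ <;> simp [hT, hd]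
    · intro C hC D hD
      obtain ⟨p, hp, rfl⟩ := List.mem_map.1 hC
      obtain ⟨h1, q, hq, h2, _⟩ := mem_compP (fun r hr => (h.2.1 r hr).2.1) hp
      obtain ⟨r, hr, rfl⟩ := List.mem_map.1 hD
      have hrR : r = (R, R) := by
        by_cases hd : R = ∅
        · rw [hT, if_pos hd] at hr; simp at hr
        · rw [hT, if_neg hd, List.mem_singleton] at hr; exact hr
      subst hrR
      have : Disjoint (carrierP σ) R := Finset.disjoint_sdiff
      exact this.mono (h2.trans (fst_sub_carrier hq)) (Finset.Subset.refl _)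
  · -- carrier = range
    rw [carrierP_append, carrierP_compP (fun r hr => (h.2.1 r hr).2.1)]
    by_cases hd : R = ∅
    · rw [hT, if_pos hd]
      rw [carrierP_nil, Finset.union_empty]
      rw [hR, Finset.sdiff_eq_empty_iff_subset] at hd
      exact le_antisymm (carrier_sub_range h) hd
    · rw [hT, if_neg hd, carrierP_cons, carrierP_nil, Finset.union_empty, hR,
        Finset.union_sdiff_of_subset (carrier_sub_range h)]
  · -- p.2 = p.1
    intro p hp
    rcases List.mem_append.1 hp with hp | hp
    · exact (mem_compP (fun r hr => (h.2.1 r hr).2.1) hp).1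
    · by_cases hd : R = ∅
      · rw [hT, if_pos hd] at hp; simp at hp
      · rw [hT, if_neg hd, List.mem_singleton] at hp; subst hp; rfl
  · exact nodes_sub_comp σ ∅ T (fun r hr => (h.2.1 r hr).2.1)

lemma part6 {n : ℕ} {σ : RawPOSP} (h : IsPOSP n σ) (W : Finset (Finset ℕ × ℕ)) :
    (W ⊆ nodesP σ ∧ W.Nonempty) ↔ ∃ S : Finset ℕ, S ⊂ colorsP σ ∧ W = nodesP (dl σ S) := by
  classical
  constructor
  · rintro ⟨hWs, hWne⟩
    set X := W.image Prod.snd with hX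
    refine ⟨colorsP σ \ X, ?_, ?_⟩
    · rw [Finset.ssubset_iff_subset_ne]
      refine ⟨Finset.sdiff_subset, ?_⟩
      obtain ⟨w, hw⟩ := hWne
      have h1 : w.2 ∈ colorsP σ := snd_mem_colors (hWs hw)
      have h2 : w.2 ∈ X := Finset.mem_image_of_mem _ hw
      intro he
      have := he ▸ h1
      rw [Finset.mem_sdiff] at this
      exact this.2 h2
    · rw [nodes_dl]
      ext q
      rw [Finset.mem_filter]
      constructor
      · intro hq
        refine ⟨hWs hq, ?_⟩
        rw [Finset.mem_sdiff]
        push_neg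
        intro _
        exact Finset.mem_image_of_mem _ hq
      · rintro ⟨hq, hq2⟩
        rw [Finset.mem_sdiff] at hq2
        push_neg at hq2
        have hqX : q.2 ∈ X := hq2 (snd_mem_colors hq)
        obtain ⟨w, hw, hwq⟩ := Finset.mem_image.1 hqX
        have := snd_injOn (isPOSP_good h) (hWs hw) hq hwq
        rwa [← this]
  · rintro ⟨S, hS, rfl⟩
    rw [nodes_dl]
    refine ⟨Finset.filter_subset _ _, ?_⟩
    obtain ⟨x, hx, hxS⟩ := Finset.exists_of_ssubset hS
    obtain ⟨C, hC⟩ := exists_node hx ∅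
    exact ⟨(C, x), Finset.mem_filter.2 ⟨hC, hxS⟩⟩


/-- `σ ↦ V(σ)` is a bijection from partial ordered set partitions of `[n]` onto the
nonempty simplices of `χ(Δⁿ)`; `|V(σ)| = dim σ + 1`; ordered set partitions of `[n]`
give maximal simplices; the nonempty subsets of `V(σ)` are exactly the `V(dl(σ,S))`
for `S ⊊ C(σ)`. -/
theorem statement5 (n : ℕ) :
    (∀ σ : RawPOSP, IsPOSP n σ → IsSimplexChi n (nodesP σ) ∧ (nodesP σ).Nonempty) ∧
    (∀ σ τ : RawPOSP, IsPOSP n σ → IsPOSP n τ → nodesP σ = nodesP τ → σ = τ) ∧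
    (∀ W : Finset (Finset ℕ × ℕ), IsSimplexChi n W → W.Nonempty →
      ∃ σ : RawPOSP, IsPOSP n σ ∧ nodesP σ = W) ∧
    (∀ σ : RawPOSP, IsPOSP n σ → (nodesP σ).card = (colorsP σ).card) ∧
    (∀ σ : RawPOSP, IsFullOSP n σ → (nodesP σ).card = n + 1 ∧
      ∀ W : Finset (Finset ℕ × ℕ), IsSimplexChi n W → nodesP σ ⊆ W → W = nodesP σ) ∧
    (∀ σ : RawPOSP, IsPOSP n σ → ∀ W : Finset (Finset ℕ × ℕ),
      (W ⊆ nodesP σ ∧ W.Nonempty) ↔ ∃ S : Finset ℕ, S ⊂ colorsP σ ∧ W = nodesP (dl σ S)) := by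
  have hcard : ∀ σ : RawPOSP, IsPOSP n σ → (nodesP σ).card = (colorsP σ).card :=
    fun σ h => card_nodesAux (isPOSP_good h)
  have hfullcard : ∀ σ : RawPOSP, IsFullOSP n σ → (nodesP σ).card = n + 1 := by
    intro σ hf
    rw [hcard σ hf.1, colors_eq_carrier hf.2.2, hf.2.1, Finset.card_range]
  refine ⟨?_, ?_, ?_, hcard, ?_, fun σ h => part6 h⟩
  · intro σ h
    obtain ⟨τ, hτ, hsub⟩ := completion h
    refine ⟨⟨τ, hτ, hsub⟩, ?_⟩
    obtain ⟨x, hx⟩ := colors_nonempty h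
    obtain ⟨C, hC⟩ := exists_node hx ∅
    exact ⟨(C, x), hC⟩
  · intro σ τ hσ hτ h
    exact nodesAux_inj σ τ ∅ (isPOSP_good hσ) (isPOSP_good hτ) h
  · rintro W ⟨τ, hτ, hsub⟩ hne
    obtain ⟨S, hS, rfl⟩ := (part6 hτ.1 W).1 ⟨hsub, hne⟩
    exact ⟨dl τ S, dl_isPOSP hτ.1 hS, rfl⟩
  · intro σ hf
    refine ⟨hfullcard σ hf, ?_⟩
    rintro W ⟨τ, hτ, hWsub⟩ hsub
    have h1 : nodesP σ ⊆ nodesP τ := hsub.trans hWsub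
    have h2 : nodesP σ = nodesP τ :=
      Finset.eq_of_subset_of_card_le h1 (by rw [hfullcard σ hf, hfullcard τ hτ])
    exact le_antisymm (h2 ▸ hWsub) hsub
end

section
/- Let Σ = (x_0,…,x_n) be a permutation of [n]. The standard matching M_Σ is a well-defined near-perfect matching of the graph Γ_n, whose unique critical (unmatched) vertex is the ordered set partition ({x_0}|{x_1}|…|{x_n}) into singletons. -/
open Finset

/-! ### Auxiliary lemmas -/

lemma lunion_nil {α : Type*} [DecidableEq α] : lunion ([] : List (Finset α)) = ∅ := rfl

lemma lunion_cons {α : Type*} [DecidableEq α] (A : Finset α) (L : List (Finset α)) :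
    lunion (A :: L) = A ∪ lunion L := rfl

lemma lunion_append {α : Type*} [DecidableEq α] (P Q : List (Finset α)) :
    lunion (P ++ Q) = lunion P ∪ lunion Q := by
  induction P with
  | nil => simp [lunion_nil, lunion_cons]
  | cons A P ih => simp [lunion_cons, ih, Finset.union_assoc]

lemma mem_lunion {α : Type*} [DecidableEq α] {L : List (Finset α)} {x : α} :
    x ∈ lunion L ↔ ∃ A ∈ L, x ∈ A := by
  induction L with
  | nil => simp [lunion_nil]
  | cons A L ih => simp [lunion_cons, ih]

lemma lunion_reverse {α : Type*} [DecidableEq α] (L : List (Finset α)) :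
    lunion L.reverse = lunion L := by
  induction L with
  | nil => rfl
  | cons A L ih => simp [lunion_cons, lunion_append, ih, lunion_nil, Finset.union_comm]

lemma lunion_map_singleton (t : List ℕ) :
    lunion (t.map (fun y => ({y} : Finset ℕ))) = t.toFinset := by
  induction t with
  | nil => rfl
  | cons a t ih => rw [List.map_cons, lunion_cons, ih, List.toFinset_cons, Finset.insert_eq]

lemma flip_append {x : ℕ} {P L : List (Finset ℕ)} (h : x ∉ lunion P) :
    flipOSP x (P ++ L) = P ++ flipOSP x L := by
  induction P with
  | nil => simp
  | cons A P ih =>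
      rw [lunion_cons, Finset.mem_union] at h
      push_neg at h
      simp only [List.cons_append, flipOSP, if_neg h.1]
      rw [ih h.2]

lemma flip_split {x : ℕ} {A : Finset ℕ} {P T : List (Finset ℕ)} (hx : x ∈ A)
    (h2 : 2 ≤ A.card) (hP : x ∉ lunion P) :
    flipOSP x (P ++ A :: T) = P ++ {x} :: A.erase x :: T := by
  rw [flip_append hP]
  simp only [flipOSP, if_pos hx, if_pos h2]

lemma flip_merge {x : ℕ} {B : Finset ℕ} {P T : List (Finset ℕ)} (hP : x ∉ lunion P) :
    flipOSP x (P ++ {x} :: B :: T) = P ++ insert x B :: T := by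
  rw [flip_append hP]
  have : ¬ (2 ≤ ({x} : Finset ℕ).card) := by simp
  simp only [flipOSP, if_pos (Finset.mem_singleton_self x), if_neg this]

lemma levelAux_some_of (t : List ℕ) (x : ℕ) (xs' : List ℕ) (A : Finset ℕ)
    (Rs' : List (Finset ℕ)) (hA : A ≠ {x}) :
    levelAux (t ++ x :: xs') (t.map (fun y => ({y} : Finset ℕ)) ++ A :: Rs') = some x := by
  induction t with
  | nil => simp [levelAux, hA]
  | cons a t ih => simpa [levelAux] using ih

lemma levelAux_eq_some {xs : List ℕ} {Rs : List (Finset ℕ)} {x : ℕ}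
    (h : levelAux xs Rs = some x) :
    ∃ t xs' A Rs', xs = t ++ x :: xs' ∧
      Rs = t.map (fun y => ({y} : Finset ℕ)) ++ A :: Rs' ∧ A ≠ {x} := by
  induction xs generalizing Rs with
  | nil => simp [levelAux] at h
  | cons y ys ih =>
      cases Rs with
      | nil => simp [levelAux] at h
      | cons A As =>
          by_cases hA : A = {y}
          · rw [levelAux, if_pos hA] at h
            obtain ⟨t, xs', A', Rs', h1, h2, h3⟩ := ih h
            exact ⟨y :: t, xs', A', Rs', by simp [h1], by simp [h2, hA], h3⟩
          · rw [levelAux, if_neg hA] at h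
            obtain rfl : y = x := by simpa using h
            exact ⟨[], ys, A, As, rfl, by simp, hA⟩

lemma levelAux_eq_none {xs : List ℕ} {Rs : List (Finset ℕ)}
    (h : levelAux xs Rs = none) :
    Rs.take xs.length = (xs.take Rs.length).map (fun y => ({y} : Finset ℕ)) := by
  induction xs generalizing Rs with
  | nil => simp
  | cons y ys ih =>
      cases Rs with
      | nil => simp
      | cons A As =>
          by_cases hA : A = {y}
          · rw [levelAux, if_pos hA] at h
            simpa [hA] using ih h
          · rw [levelAux, if_neg hA] at h
            simp at h

lemma levelAux_self (xs : List ℕ) :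
    levelAux xs (xs.map (fun y => ({y} : Finset ℕ))) = none := by
  induction xs with
  | nil => rfl
  | cons y ys ih => simpa [levelAux] using ih

lemma levelFn_some_of (S1 S2 L1 : List _) (A : Finset ℕ) (x : ℕ) (hA : A ≠ {x}) :
    levelFn (S1 ++ x :: S2) (L1 ++ A :: S2.map (fun y => ({y} : Finset ℕ))) = some x := by
  unfold levelFn
  rw [List.reverse_append, List.reverse_cons, List.reverse_append, List.reverse_cons]
  rw [List.append_assoc, List.append_assoc]
  simpa using levelAux_some_of S2.reverse x S1.reverse A L1.reverse hA

lemma exists_first_block {x : ℕ} {L : List (Finset ℕ)} (h : x ∈ lunion L) :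
    ∃ P C Q, L = P ++ C :: Q ∧ x ∈ C ∧ x ∉ lunion P := by
  induction L with
  | nil => simp [lunion_nil] at h
  | cons A L ih =>
      by_cases hA : x ∈ A
      · exact ⟨[], A, L, rfl, hA, by simp [lunion_nil]⟩
      · rw [lunion_cons, Finset.mem_union] at h
        obtain ⟨P, C, Q, h1, h2, h3⟩ := ih (h.resolve_left hA)
        exact ⟨A :: P, C, Q, by simp [h1], h2, by simp [lunion_cons, hA, h3]⟩

lemma mem_of_getLast?' {α : Type*} {l : List α} {a : α} (h : l.getLast? = some a) : a ∈ l := by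
  induction l with
  | nil => simp at h
  | cons b l ih =>
      cases l with
      | nil => simp_all
      | cons c l => rw [List.getLast?_cons_cons] at h; exact List.mem_cons_of_mem _ (ih h)

lemma disjoint_lunion {A : Finset ℕ} {L : List (Finset ℕ)} (h : ∀ B ∈ L, Disjoint A B) :
    Disjoint A (lunion L) := by
  induction L with
  | nil => simp [lunion_nil]
  | cons B L ih =>
      rw [lunion_cons, Finset.disjoint_union_right]
      exact ⟨h B (by simp), ih fun C hC => h C (by simp [hC])⟩

lemma not_mem_lunion_of_pairwise {x : ℕ} {P T : List (Finset ℕ)} {A : Finset ℕ}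
    (hpw : (P ++ A :: T).Pairwise (fun B C => Disjoint B C)) (hx : x ∈ A) :
    x ∉ lunion P := by
  rw [List.pairwise_append] at hpw
  intro hmem'
  obtain ⟨B, hB, hxB⟩ := mem_lunion.mp hmem'
  exact Finset.disjoint_left.mp (hpw.2.2 B hB A (by simp)) hxB hx

lemma length_le_card {L : List (Finset ℕ)} (hne : ∀ B ∈ L, B.Nonempty)
    (hpw : L.Pairwise (fun B C => Disjoint B C)) : L.length ≤ (lunion L).card := by
  induction L with
  | nil => simp
  | cons A L ih =>
      rw [List.pairwise_cons] at hpw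
      rw [lunion_cons, List.length_cons,
        Finset.card_union_of_disjoint (disjoint_lunion hpw.1)]
      have h1 : 1 ≤ A.card := Finset.Nonempty.card_pos (hne A (by simp))
      have h2 := ih (fun B hB => hne B (by simp [hB])) hpw.2
      omega

lemma osp_split {U A : Finset ℕ} {x : ℕ} {P T : List (Finset ℕ)}
    (hL : IsOSP U (P ++ A :: T)) (hx : x ∈ A) (h2 : 2 ≤ A.card) :
    IsOSP U (P ++ {x} :: A.erase x :: T) := by
  obtain ⟨hne, hpw, hun⟩ := hL
  have hAeq : {x} ∪ A.erase x = A := by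
    rw [← Finset.insert_eq, Finset.insert_erase hx]
  have hsub1 : ({x} : Finset ℕ) ⊆ A := by simpa using hx
  have hsub2 : A.erase x ⊆ A := Finset.erase_subset x A
  refine ⟨?_, ?_, ?_⟩
  · intro B hB
    simp only [List.mem_append, List.mem_cons] at hB
    rcases hB with h | h | h | h
    · exact hne B (by simp [h])
    · exact h ▸ Finset.singleton_nonempty x
    · subst h
      rw [← Finset.card_pos, Finset.card_erase_of_mem hx]; omega
    · exact hne B (by simp [h])
  · simp only [List.pairwise_append, List.pairwise_cons, List.mem_cons] at hpw ⊢
    obtain ⟨hP, ⟨hAT, hT⟩, hcross⟩ := hpw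
    refine ⟨hP, ⟨?_, fun B hB => (hAT B hB).mono_left hsub2, hT⟩, ?_⟩
    · rintro B (rfl | hB)
      · exact Finset.disjoint_singleton_left.2 (Finset.notMem_erase x A)
      · exact (hAT B hB).mono_left hsub1
    · rintro a ha b (rfl | rfl | hb)
      · exact (hcross a ha A (Or.inl rfl)).mono_right hsub1
      · exact (hcross a ha A (Or.inl rfl)).mono_right hsub2
      · exact hcross a ha b (Or.inr hb)
  · rw [lunion_append, lunion_cons] at hun
    rw [lunion_append, lunion_cons, lunion_cons, ← Finset.union_assoc ({x} : Finset ℕ),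
      hAeq]
    exact hun

lemma osp_merge {U B : Finset ℕ} {x : ℕ} {P T : List (Finset ℕ)}
    (hL : IsOSP U (P ++ {x} :: B :: T)) : IsOSP U (P ++ insert x B :: T) := by
  obtain ⟨hne, hpw, hun⟩ := hL
  have hins : insert x B = {x} ∪ B := Finset.insert_eq x B
  refine ⟨?_, ?_, ?_⟩
  · intro C hC
    simp only [List.mem_append, List.mem_cons] at hC
    rcases hC with h | h | h
    · exact hne C (by simp [h])
    · exact h ▸ Finset.insert_nonempty x B
    · exact hne C (by simp [h])
  · simp only [List.pairwise_append, List.pairwise_cons, List.mem_cons] at hpw ⊢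
    obtain ⟨hP, ⟨hxBT, hBT, hT⟩, hcross⟩ := hpw
    refine ⟨hP, ⟨fun C hC => ?_, hT⟩, ?_⟩
    · rw [hins, Finset.disjoint_union_left]
      exact ⟨hxBT C (Or.inr hC), hBT C hC⟩
    · rintro a ha b (rfl | hb)
      · rw [hins, Finset.disjoint_union_right]
        exact ⟨hcross a ha {x} (Or.inl rfl), hcross a ha B (Or.inr (Or.inl rfl))⟩
      · exact hcross a ha b (Or.inr (Or.inr hb))
  · rw [lunion_append, lunion_cons, lunion_cons] at hun
    rw [lunion_append, lunion_cons, hins, Finset.union_assoc]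
    exact hun

lemma level_none_iff {n : ℕ} {Sig : List ℕ} (hnd : Sig.Nodup)
    (hmem : ∀ y, y ∈ Sig ↔ y ∈ Finset.range (n + 1)) {L : List (Finset ℕ)}
    (hL : IsOSP (Finset.range (n+1)) L) :
    levelFn Sig L = none ↔ L = Sig.map (fun y => ({y} : Finset ℕ)) := by
  have hST : Sig.toFinset = Finset.range (n+1) := by
    ext y; simp [hmem y]
  have hSlen : Sig.length = n + 1 := by
    rw [← List.toFinset_card_of_nodup hnd, hST, Finset.card_range]
  constructor
  · intro h
    have hLlen : L.length ≤ n + 1 := by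
      have := length_le_card hL.1 hL.2.1
      rw [hL.2.2, Finset.card_range] at this
      exact this
    unfold levelFn at h
    have h1 := levelAux_eq_none h
    rw [List.take_of_length_le
      (by rw [List.length_reverse, List.length_reverse, hSlen]; omega)] at h1
    rw [List.length_reverse] at h1
    have h2 : lunion L = (Sig.reverse.take L.length).toFinset := by
      rw [← lunion_reverse, h1, lunion_map_singleton]
    have hnd' : (Sig.reverse.take L.length).Nodup :=
      (List.take_sublist _ _).nodup (List.nodup_reverse.mpr hnd)
    have hlen2 : (Sig.reverse.take L.length).length = L.length := by
      rw [List.length_take, List.length_reverse, hSlen]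
      omega
    have hLn : L.length = n + 1 := by
      have h3 := congrArg Finset.card h2
      rw [hL.2.2, Finset.card_range, List.toFinset_card_of_nodup hnd', hlen2] at h3
      omega
    rw [List.take_of_length_le
      (by rw [List.length_reverse, hSlen, hLn])] at h1
    have h4 : L.reverse.reverse = (Sig.reverse.map (fun y => ({y} : Finset ℕ))).reverse :=
      congrArg List.reverse h1
    rwa [List.reverse_reverse, ← List.map_reverse, List.reverse_reverse] at h4
  · intro h
    subst h
    unfold levelFn
    rw [← List.map_reverse]
    exact levelAux_self _

lemma mem_Fset {n x : ℕ} {L : List (Finset ℕ)} (hxr : x ∈ Finset.range (n+1))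
    (h : ∀ B, L.getLast? = some B → B.card = 1 → x ∉ B) : x ∈ Fset n L := by
  unfold Fset
  split
  · rename_i A hA
    by_cases hc : A.card = 1
    · rw [if_pos hc, Finset.mem_sdiff]
      exact ⟨hxr, h A hA hc⟩
    · rwa [if_neg hc]
  · exact hxr

lemma key_flip {n : ℕ} {Sig : List ℕ} (hnd : Sig.Nodup)
    (hmem : ∀ y, y ∈ Sig ↔ y ∈ Finset.range (n + 1)) {L : List (Finset ℕ)}
    (hL : IsOSP (Finset.range (n+1)) L) {x : ℕ} (hx : levelFn Sig L = some x) :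
    IsOSP (Finset.range (n+1)) (flipOSP x L) ∧ x ∈ Fset n L ∧
      (flipOSP x L).length ≠ L.length ∧ levelFn Sig (flipOSP x L) = some x ∧
      flipOSP x (flipOSP x L) = L := by
  unfold levelFn at hx
  obtain ⟨t, xs', A, Rs', h1, h2, h3⟩ := levelAux_eq_some hx
  have hSig : Sig = xs'.reverse ++ x :: t.reverse := by
    have := congrArg List.reverse h1
    simpa using this
  have hLeq : L = Rs'.reverse ++ A :: t.reverse.map (fun y => ({y} : Finset ℕ)) := by
    have := congrArg List.reverse h2
    simpa [List.map_reverse] using this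
  have hxSig : x ∈ Sig := by rw [hSig]; simp
  have hxr : x ∈ Finset.range (n+1) := (hmem x).1 hxSig
  have hxS2 : x ∉ t.reverse := by
    have hnd' : (xs'.reverse ++ x :: t.reverse).Nodup := hSig ▸ hnd
    have := hnd'.sublist (List.sublist_append_right _ _)
    exact (List.nodup_cons.mp this).1
  have hxT : x ∉ lunion (t.reverse.map (fun y => ({y} : Finset ℕ))) := by
    rw [lunion_map_singleton]
    simpa using hxS2
  have hxL : x ∈ lunion L := by rw [hL.2.2]; exact hxr
  have hFset : x ∈ Fset n L := by
    apply mem_Fset hxr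
    intro B hB hc hxB
    obtain ⟨a, rfl⟩ := Finset.card_eq_one.mp hc
    obtain rfl : x = a := by simpa using hxB
    rw [hLeq, List.getLast?_append_cons] at hB
    have hBmem := mem_of_getLast?' hB
    rcases List.mem_cons.mp hBmem with h | h
    · exact h3 h.symm
    · obtain ⟨z, hz, hz2⟩ := List.mem_map.mp h
      have hzx : z = x := Finset.singleton_injective hz2
      exact hxS2 (hzx ▸ hz)
  by_cases hxA : x ∈ A
  · -- split case at A
    have h2c : 2 ≤ A.card := by
      have h1c : 1 ≤ A.card := Finset.card_pos.mpr ⟨x, hxA⟩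
      by_contra hlt
      push_neg at hlt
      have hc1 : A.card = 1 := by omega
      obtain ⟨a, rfl⟩ := Finset.card_eq_one.mp hc1
      obtain rfl : x = a := by simpa using hxA
      exact h3 rfl
    have hxL1 : x ∉ lunion Rs'.reverse := not_mem_lunion_of_pairwise (hLeq ▸ hL.2.1) hxA
    have hflip : flipOSP x L
        = Rs'.reverse ++ {x} :: A.erase x :: t.reverse.map (fun y => ({y} : Finset ℕ)) := by
      rw [hLeq]; exact flip_split hxA h2c hxL1
    refine ⟨?_, hFset, ?_, ?_, ?_⟩
    · rw [hflip]; exact osp_split (hLeq ▸ hL) hxA h2c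
    · rw [hflip, hLeq]; simp only [List.length_append, List.length_cons]; omega
    · rw [hflip, hSig]
      have heq : Rs'.reverse ++ {x} :: A.erase x :: t.reverse.map (fun y => ({y} : Finset ℕ))
          = (Rs'.reverse ++ [{x}]) ++ A.erase x :: t.reverse.map (fun y => ({y} : Finset ℕ)) := by
        simp
      rw [heq]
      exact levelFn_some_of _ _ _ _ _
        (fun h => Finset.notMem_erase x A (h ▸ Finset.mem_singleton_self x))
    · rw [hflip, flip_merge hxL1, Finset.insert_erase hxA]
      exact hLeq.symm
  · -- x lies in an earlier block
    have hxL1 : x ∈ lunion Rs'.reverse := by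
      rw [hLeq, lunion_append, lunion_cons] at hxL
      rcases Finset.mem_union.mp hxL with h | h
      · exact h
      · rcases Finset.mem_union.mp h with h' | h'
        · exact absurd h' hxA
        · exact absurd h' hxT
    obtain ⟨P, C, Q, hPQ, hxC, hxP⟩ := exists_first_block hxL1
    have hLeq2 : L = P ++ C :: (Q ++ A :: t.reverse.map (fun y => ({y} : Finset ℕ))) := by
      rw [hLeq, hPQ]; simp
    by_cases h2c : 2 ≤ C.card
    · have hflip : flipOSP x L
          = P ++ {x} :: C.erase x :: (Q ++ A :: t.reverse.map (fun y => ({y} : Finset ℕ))) := by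
        rw [hLeq2]; exact flip_split hxC h2c hxP
      refine ⟨?_, hFset, ?_, ?_, ?_⟩
      · rw [hflip]; exact osp_split (hLeq2 ▸ hL) hxC h2c
      · rw [hflip, hLeq2]; simp only [List.length_append, List.length_cons]; omega
      · rw [hflip, hSig]
        have heq : P ++ {x} :: C.erase x :: (Q ++ A :: t.reverse.map (fun y => ({y} : Finset ℕ)))
            = (P ++ {x} :: C.erase x :: Q) ++ A :: t.reverse.map (fun y => ({y} : Finset ℕ)) := by
          simp
        rw [heq]
        exact levelFn_some_of _ _ _ _ _ h3
      · rw [hflip, flip_merge hxP, Finset.insert_erase hxC]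
        exact hLeq2.symm
    · have hC : C = {x} := by
        have h1c : 1 ≤ C.card := Finset.card_pos.mpr ⟨x, hxC⟩
        push_neg at h2c
        have hc1 : C.card = 1 := by omega
        obtain ⟨a, rfl⟩ := Finset.card_eq_one.mp hc1
        obtain rfl : x = a := by simpa using hxC
        rfl
      subst hC
      cases Q with
      | nil =>
          have hLeq3 : L = P ++ {x} :: A :: t.reverse.map (fun y => ({y} : Finset ℕ)) := by
            simpa using hLeq2
          have hBne : A.Nonempty := hL.1 A (by rw [hLeq3]; simp)
          have hcard : 2 ≤ (insert x A).card := by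
            rw [Finset.card_insert_of_notMem hxA]
            have := Finset.card_pos.mpr hBne; omega
          have hflip : flipOSP x L
              = P ++ insert x A :: t.reverse.map (fun y => ({y} : Finset ℕ)) := by
            rw [hLeq3]; exact flip_merge hxP
          refine ⟨?_, hFset, ?_, ?_, ?_⟩
          · rw [hflip]; exact osp_merge (hLeq3 ▸ hL)
          · rw [hflip, hLeq3]; simp only [List.length_append, List.length_cons]; omega
          · rw [hflip, hSig]
            refine levelFn_some_of _ _ _ _ _ ?_
            intro h
            have hcc := congrArg Finset.card h
            rw [Finset.card_singleton] at hcc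
            omega
          · rw [hflip, flip_split (Finset.mem_insert_self x A) hcard hxP,
              Finset.erase_insert hxA]
            exact hLeq3.symm
      | cons B Q' =>
          have hLeq3 : L = P ++ {x} :: B :: (Q' ++ A :: t.reverse.map (fun y => ({y} : Finset ℕ))) := by
            rw [hLeq2]; simp
          have hxB : x ∉ B := by
            have hpw := hL.2.1
            rw [hLeq3, List.pairwise_append, List.pairwise_cons] at hpw
            exact Finset.disjoint_singleton_left.mp (hpw.2.1.1 B (by simp))
          have hBne : B.Nonempty := hL.1 B (by rw [hLeq3]; simp)
          have hcard : 2 ≤ (insert x B).card := by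
            rw [Finset.card_insert_of_notMem hxB]
            have := Finset.card_pos.mpr hBne; omega
          have hflip : flipOSP x L
              = P ++ insert x B :: (Q' ++ A :: t.reverse.map (fun y => ({y} : Finset ℕ))) := by
            rw [hLeq3]; exact flip_merge hxP
          refine ⟨?_, hFset, ?_, ?_, ?_⟩
          · rw [hflip]; exact osp_merge (hLeq3 ▸ hL)
          · rw [hflip, hLeq3]; simp only [List.length_append, List.length_cons]; omega
          · rw [hflip, hSig]
            have heq : P ++ insert x B :: (Q' ++ A :: t.reverse.map (fun y => ({y} : Finset ℕ)))
                = (P ++ insert x B :: Q') ++ A :: t.reverse.map (fun y => ({y} : Finset ℕ)) := by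
              simp
            rw [heq]
            exact levelFn_some_of _ _ _ _ _ h3
          · rw [hflip, flip_split (Finset.mem_insert_self x B) hcard hxP,
              Finset.erase_insert hxB]
            exact hLeq3.symm

/-- For a permutation `Σ` of `[n]`, the standard matching `M_Σ` is a near-perfect
matching of `Γ_n` whose unique critical vertex is the partition of `[n]` into the
singletons `({x_0}|{x_1}|…|{x_n})`. -/
theorem statement11 (n : ℕ) (Sig : List ℕ) (hnd : Sig.Nodup)
    (hmem : ∀ y, y ∈ Sig ↔ y ∈ Finset.range (n + 1)) :
    IsMatchingSet (Gamma n) (MSigma n Sig) ∧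
    ∀ v : OSPn n, CriticalVx (MSigma n Sig) v ↔
      v.1 = Sig.map (fun y => ({y} : Finset ℕ)) := by
  constructor
  · constructor
    · rintro e ⟨σ, τ, x, h1, h2, rfl⟩
      rw [SimpleGraph.mem_edgeSet]
      obtain ⟨hosp, hF, hlen, hlev, hinv⟩ := key_flip hnd hmem σ.2 h1
      show σ ≠ τ ∧ _
      refine ⟨?_, Or.inl ⟨x, hF, h2⟩⟩
      intro h
      exact hlen (by rw [← h2, h])
    · rintro e ⟨σ, τ, x, h1, h2, rfl⟩ f ⟨σ', τ', x', h1', h2', rfl⟩ v hv hv'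
      obtain ⟨_, _, _, hlev, hinv⟩ := key_flip hnd hmem σ.2 h1
      obtain ⟨_, _, _, hlev', hinv'⟩ := key_flip hnd hmem σ'.2 h1'
      have hlτ : levelFn Sig τ.1 = some x := by rw [h2]; exact hlev
      have hfτ : flipOSP x τ.1 = σ.1 := by rw [h2]; exact hinv
      have hlτ' : levelFn Sig τ'.1 = some x' := by rw [h2']; exact hlev'
      have hfτ' : flipOSP x' τ'.1 = σ'.1 := by rw [h2']; exact hinv'
      rw [Sym2.mem_iff] at hv hv'
      rcases hv with rfl | rfl <;> rcases hv' with h | h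
      · -- v = σ, σ' = v
        have hxx : x = x' := by
          have := h1'
          rw [← h] at this
          rw [h1] at this
          exact Option.some.inj this
        have : τ = τ' := Subtype.ext (by rw [h2, h2', ← h, hxx])
        rw [h, this]
      · -- v = σ, τ' = v
        have hxx : x = x' := by
          have := hlτ'
          rw [← h, h1] at this
          exact Option.some.inj this
        have hστ : σ' = τ := Subtype.ext (by rw [h2, ← hfτ', h, hxx])
        rw [← h, hστ, Sym2.eq_swap]
      · -- v = τ, σ' = v
        have hxx : x = x' := by
          have := h1'
          rw [← h, hlτ] at this
          exact Option.some.inj this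
        have hστ : τ' = σ := Subtype.ext (by rw [h2', ← h, ← hxx, hfτ])
        rw [← h, hστ, Sym2.eq_swap]
      · -- v = τ, τ' = v
        have hxx : x = x' := by
          have := hlτ'
          rw [← h, hlτ] at this
          exact Option.some.inj this
        have hσσ : σ = σ' := Subtype.ext (by rw [← hfτ, ← hfτ', ← h, hxx])
        rw [h, hσσ]
  · intro v
    constructor
    · intro hcrit
      by_contra hne
      have hnn : levelFn Sig v.1 ≠ none := fun h =>
        hne ((level_none_iff hnd hmem v.2).mp h)
      obtain ⟨x, hx⟩ := Option.ne_none_iff_exists'.mp hnn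
      obtain ⟨hosp, _, _, _, _⟩ := key_flip hnd hmem v.2 hx
      exact hcrit s(v, ⟨flipOSP x v.1, hosp⟩)
        ⟨v, ⟨flipOSP x v.1, hosp⟩, x, hx, rfl, rfl⟩ (Sym2.mem_mk_left _ _)
    · rintro hv e ⟨σ, τ, x, h1, h2, rfl⟩ hve
      have hnone : levelFn Sig v.1 = none := (level_none_iff hnd hmem v.2).mpr hv
      obtain ⟨_, _, _, hlev, _⟩ := key_flip hnd hmem σ.2 h1
      rw [Sym2.mem_iff] at hve
      rcases hve with rfl | rfl
      · rw [h1] at hnone; exact Option.some_ne_none x hnone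
      · rw [h2] at hnone
        rw [hlev] at hnone
        exact Option.some_ne_none x hnone
end
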